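/- Approximation of the cycling sum by its periodic limit (Proposition 5.3). There exists a constant C > 0, depending only on L, γ₀ and γ, such that for all integers n ≥ 1 and all η > 0 with nL ≥ 2η, one has |S̃(n,η) − Ŝ(η)| ≤ C (e^{−(nL − 2η)} + e^{−γ e^{2η}/2}) Ŝ(η). -/

import Mathlib

open MeasureTheory

private lemma te_le_one {t : ℝ} (ht : 0 ≤ t) : t * Real.exp (-t) ≤ 1 := by
  have h1 : t ≤ Real.exp t := by linarith [Real.add_one_le_exp t]
  have h2 : t * Real.exp (-t) ≤ Real.exp t * Real.exp (-t) :=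
    mul_le_mul_of_nonneg_right h1 (Real.exp_nonneg _)
  calc t * Real.exp (-t) ≤ Real.exp t * Real.exp (-t) := h2
    _ = 1 := by rw [← Real.exp_add]; simp

private lemma sum_w_abs (w : ℝ) (hw0 : 0 < w) (hw1 : w < 1) (n : ℕ) :
    ∑ l ∈ Finset.range n, w ^ (((n : ℤ) - 2 * (l : ℤ)).natAbs) ≤ 2 * (1 - w)⁻¹ := by
  have hgeom : Summable (fun j : ℕ => w ^ j) := summable_geometric_of_lt_one hw0.le hw1
  have htsum : ∑' j : ℕ, w ^ j = (1 - w)⁻¹ := tsum_geometric_of_lt_one hw0.le hw1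
  rw [← Finset.sum_filter_add_sum_filter_not (Finset.range n) (fun l => 2 * l ≤ n)]
  have h1 : ∑ l ∈ (Finset.range n).filter (fun l => 2 * l ≤ n),
      w ^ (((n : ℤ) - 2 * (l : ℤ)).natAbs) ≤ (1 - w)⁻¹ := by
    have hcongr : ∑ l ∈ (Finset.range n).filter (fun l => 2 * l ≤ n),
        w ^ (((n : ℤ) - 2 * (l : ℤ)).natAbs)
        = ∑ l ∈ (Finset.range n).filter (fun l => 2 * l ≤ n), w ^ (n - 2 * l) := by
      apply Finset.sum_congr rfl
      intro l hl
      simp only [Finset.mem_filter] at hl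
      congr 1
      omega
    rw [hcongr]
    rw [← Finset.sum_image (f := fun j => w ^ j)
      (g := fun l => n - 2 * l)
      (by intro x hx y hy hxy
          simp only [Finset.coe_filter, Set.mem_setOf_eq, Finset.mem_filter, Finset.mem_range] at hx hy
          have hxy' : n - 2 * x = n - 2 * y := hxy
          omega)]
    calc _ ≤ ∑' j : ℕ, w ^ j :=
            Summable.sum_le_tsum _ (fun i _ => pow_nonneg hw0.le i) hgeom
      _ = (1 - w)⁻¹ := htsum
  have h2 : ∑ l ∈ (Finset.range n).filter (fun l => ¬(2 * l ≤ n)),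
      w ^ (((n : ℤ) - 2 * (l : ℤ)).natAbs) ≤ (1 - w)⁻¹ := by
    have hcongr : ∑ l ∈ (Finset.range n).filter (fun l => ¬(2 * l ≤ n)),
        w ^ (((n : ℤ) - 2 * (l : ℤ)).natAbs)
        = ∑ l ∈ (Finset.range n).filter (fun l => ¬(2 * l ≤ n)), w ^ (2 * l - n) := by
      apply Finset.sum_congr rfl
      intro l hl
      simp only [Finset.mem_filter] at hl
      congr 1
      omega
    rw [hcongr]
    rw [← Finset.sum_image (f := fun j => w ^ j)
      (g := fun l => 2 * l - n)
      (by intro x hx y hy hxy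
          simp only [Finset.coe_filter, Set.mem_setOf_eq, Finset.mem_filter, Finset.mem_range] at hx hy
          have hxy' : 2 * x - n = 2 * y - n := hxy
          omega)]
    calc _ ≤ ∑' j : ℕ, w ^ j :=
            Summable.sum_le_tsum _ (fun i _ => pow_nonneg hw0.le i) hgeom
      _ = (1 - w)⁻¹ := htsum
  linarith

set_option maxHeartbeats 1600000 in
/-- Approximation of the cycling sum by its periodic limit (Proposition 5.3). -/
theorem cycling_sum_approx
    (L γ₀ γ : ℝ) (hL : 0 < L) (hγ₀ : 0 < γ₀) (hγ : 0 < γ)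
    (θ₀ θb : ℝ) (hθ₀ : θ₀ = -(1/2) * Real.log γ₀) (hθb : θb = -(1/2) * Real.log γ)
    (A B : ℝ → ℝ)
    (hA : ∀ x, A x = 1/2 * Real.exp (-2 * x) * Real.exp (-(1/2) * Real.exp (-2 * x)))
    (hB : ∀ x, B x = Real.exp (-(1/2) * Real.exp (-2 * x)))
    (St : ℕ → ℝ → ℝ)
    (hSt : ∀ n η, St n η =
      ∑ l ∈ Finset.range n, A ((l : ℝ) * L - η + θb) * B (((n : ℝ) - l) * L - η + θ₀))
    (Sh : ℝ → ℝ)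
    (hSh : ∀ η, Sh η = ∑' l : ℤ, A ((l : ℝ) * L - η + θb)) :
    ∃ C > 0, ∀ n : ℕ, 1 ≤ n → ∀ η : ℝ, 0 < η → 2 * η ≤ (n : ℝ) * L →
      |St n η - Sh η|
        ≤ C * (Real.exp (-((n : ℝ) * L - 2 * η)) + Real.exp (-γ * Real.exp (2 * η) / 2))
            * Sh η := by
  -- constants
  have hexp2L : (1 : ℝ) < Real.exp (2 * L) := by
    rw [← Real.exp_zero]; exact Real.exp_lt_exp.2 (by linarith)
  obtain ⟨K₂, hK₂⟩ : ∃ x : ℝ, x = 2 + 2 / (Real.exp (2 * L) - 1) := ⟨_, rfl⟩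
  have hK₂pos : 0 < K₂ := by
    rw [hK₂]
    have : 0 < Real.exp (2 * L) - 1 := by linarith
    positivity
  obtain ⟨ρ, hρ⟩ : ∃ x : ℝ, x = Real.exp (-(γ * L / 2)) := ⟨_, rfl⟩
  have hρ0 : 0 < ρ := by rw [hρ]; exact Real.exp_pos _
  have hρ1 : ρ < 1 := by rw [hρ]; exact Real.exp_lt_one_iff.2 (by nlinarith)
  obtain ⟨C₁, hC₁⟩ : ∃ x : ℝ, x = K₂ * (1 - ρ)⁻¹ := ⟨_, rfl⟩
  have hC₁pos : 0 < C₁ := by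
    rw [hC₁]
    have : 0 < 1 - ρ := by linarith
    positivity
  obtain ⟨r, hr⟩ : ∃ x : ℝ, x = Real.exp (-(2 * L)) := ⟨_, rfl⟩
  have hr0 : 0 < r := by rw [hr]; exact Real.exp_pos _
  have hr1 : r < 1 := by rw [hr]; exact Real.exp_lt_one_iff.2 (by linarith)
  obtain ⟨C₂, hC₂⟩ : ∃ x : ℝ, x = γ / 2 * (1 - r)⁻¹ := ⟨_, rfl⟩
  have hC₂pos : 0 < C₂ := by
    rw [hC₂]
    have : 0 < 1 - r := by linarith
    positivity
  obtain ⟨K₃, hK₃⟩ : ∃ x : ℝ, x = max 1 (γ / 2) * max 1 (γ₀ / 2) := ⟨_, rfl⟩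
  have hK₃pos : 0 < K₃ := by
    rw [hK₃]
    have h1 : (0:ℝ) < max 1 (γ / 2) := lt_max_of_lt_left one_pos
    have h2 : (0:ℝ) < max 1 (γ₀ / 2) := lt_max_of_lt_left one_pos
    positivity
  obtain ⟨w, hw⟩ : ∃ x : ℝ, x = Real.exp (-(L / 2)) := ⟨_, rfl⟩
  have hw0 : 0 < w := by rw [hw]; exact Real.exp_pos _
  have hw1 : w < 1 := by rw [hw]; exact Real.exp_lt_one_iff.2 (by linarith)
  obtain ⟨C₃, hC₃⟩ : ∃ x : ℝ, x = K₃ * (2 * (1 - w)⁻¹) := ⟨_, rfl⟩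
  have hC₃pos : 0 < C₃ := by
    rw [hC₃]
    have : 0 < 1 - w := by linarith
    positivity
  obtain ⟨c₀, hc₀def⟩ : ∃ x : ℝ, x = γ / 2 * Real.exp (-(2 * L)) * Real.exp (-(γ / 2)) :=
    ⟨_, rfl⟩
  have hc₀pos : 0 < c₀ := by rw [hc₀def]; positivity
  refine ⟨(C₁ + C₂ + C₃) / c₀, by positivity, ?_⟩
  intro n hn η hη hnη
  have hexpθb : Real.exp (-(2 * θb)) = γ := by
    rw [hθb, show -(2 * (-(1/2) * Real.log γ)) = Real.log γ by ring]
    exact Real.exp_log hγ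
  have hexpθ0 : Real.exp (-(2 * θ₀)) = γ₀ := by
    rw [hθ₀, show -(2 * (-(1/2) * Real.log γ₀)) = Real.log γ₀ by ring]
    exact Real.exp_log hγ₀
  -- the profile function F and the sequence f
  obtain ⟨F, hF⟩ : ∃ F : ℝ → ℝ,
      F = fun s => γ / 2 * Real.exp s * Real.exp (-(γ / 2 * Real.exp s)) := ⟨_, rfl⟩
  obtain ⟨f, hf⟩ : ∃ f : ℤ → ℝ, f = fun l : ℤ => F (2 * η - 2 * (l : ℝ) * L) := ⟨_, rfl⟩
  have hF0 : ∀ s : ℝ, 0 ≤ F s := by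
    intro s; rw [hF]; positivity
  have hFle : ∀ s : ℝ, F s ≤ γ / 2 * Real.exp s := by
    intro s
    rw [hF]
    have h1 : Real.exp (-(γ / 2 * Real.exp s)) ≤ 1 :=
      Real.exp_le_one_iff.2 (neg_nonpos.mpr (by positivity))
    have h2 : (0:ℝ) ≤ γ / 2 * Real.exp s := by positivity
    simpa using mul_le_of_le_one_right h2 h1
  have hFle1 : ∀ s : ℝ, F s ≤ 1 := by
    intro s
    rw [hF]
    exact te_le_one (by positivity)
  have hf0 : ∀ l : ℤ, 0 ≤ f l := by
    intro l; rw [hf]; exact hF0 _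
  have hfA : ∀ l : ℤ, A ((l : ℝ) * L - η + θb) = f l := by
    intro l
    have hx : Real.exp (-2 * ((l : ℝ) * L - η + θb))
        = γ * Real.exp (2 * η - 2 * (l : ℝ) * L) := by
      rw [show -2 * ((l : ℝ) * L - η + θb)
          = (2 * η - 2 * (l : ℝ) * L) + -(2 * θb) by ring, Real.exp_add, hexpθb]
      ring
    rw [hA, hx]
    simp only [hf, hF]
    rw [show -(1/2) * (γ * Real.exp (2 * η - 2 * (l : ℝ) * L))
        = -(γ / 2 * Real.exp (2 * η - 2 * (l : ℝ) * L)) by ring]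
    ring
  -- summability on the nonnegative side
  have hposbound : ∀ k : ℕ, f k ≤ (γ / 2 * Real.exp (2 * η)) * r ^ k := by
    intro k
    have h1 : f k ≤ γ / 2 * Real.exp (2 * η - 2 * ((k : ℤ) : ℝ) * L) := by
      rw [hf]; exact hFle _
    have h2 : γ / 2 * Real.exp (2 * η - 2 * ((k : ℤ) : ℝ) * L)
        = (γ / 2 * Real.exp (2 * η)) * r ^ k := by
      rw [hr, ← Real.exp_nat_mul,
        show 2 * η - 2 * ((k : ℤ) : ℝ) * L = 2 * η + (k : ℝ) * -(2 * L) by push_cast; ring,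
        Real.exp_add]
      ring
    linarith
  have hsum_pos : Summable (fun k : ℕ => f k) := by
    refine Summable.of_nonneg_of_le (fun k => hf0 _) hposbound ?_
    exact (summable_geometric_of_lt_one hr0.le hr1).mul_left _
  -- key bound on the negative side
  have keyNeg : ∀ k : ℕ, f (-((k : ℤ) + 1))
      ≤ K₂ * Real.exp (-(γ * Real.exp (2 * η) / 2)) * ρ ^ k := by
    intro k
    obtain ⟨M, hM⟩ : ∃ x : ℝ, x = γ / 2 * Real.exp (2 * η) := ⟨_, rfl⟩
    obtain ⟨u, hu⟩ : ∃ x : ℝ, x = Real.exp (2 * ((k : ℝ) + 1) * L) := ⟨_, rfl⟩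
    have hexp2η : (1 : ℝ) ≤ Real.exp (2 * η) := Real.one_le_exp (by linarith)
    have hMγ : γ / 2 ≤ M := by
      rw [hM]
      have := mul_le_mul_of_nonneg_left hexp2η (by positivity : (0:ℝ) ≤ γ / 2)
      linarith
    have hMpos : 0 < M := by rw [hM]; positivity
    have hu2L : Real.exp (2 * L) ≤ u := by
      rw [hu]; apply Real.exp_le_exp.2
      linarith [mul_nonneg (Nat.cast_nonneg (α := ℝ) k) hL.le]
    have hu1 : 1 ≤ u := le_trans hexp2L.le hu2L
    have huk : 2 * ((k : ℝ) + 1) * L + 1 ≤ u := by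
      rw [hu]; linarith [Real.add_one_le_exp (2 * ((k : ℝ) + 1) * L)]
    obtain ⟨z, hz⟩ : ∃ x : ℝ, x = M * (u - 1) / 2 := ⟨_, rfl⟩
    have hz0 : 0 ≤ z := by
      rw [hz]
      have := mul_nonneg hMpos.le (by linarith : (0:ℝ) ≤ u - 1)
      linarith
    have hfval : f (-((k : ℤ) + 1)) = M * u * Real.exp (-(M * u)) := by
      rw [hf]
      have harg : 2 * η - 2 * (((-((k : ℤ) + 1)) : ℤ) : ℝ) * L
          = 2 * η + 2 * ((k : ℝ) + 1) * L := by push_cast; ring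
      simp only []
      rw [harg, hF]
      simp only []
      rw [Real.exp_add]
      rw [show γ / 2 * (Real.exp (2 * η) * Real.exp (2 * ((k : ℝ) + 1) * L)) = M * u by
        rw [hM, hu]; ring]
    rw [hfval]
    have hsplit : Real.exp (-(M * u))
        = Real.exp (-M) * Real.exp (-z) * Real.exp (-z) := by
      rw [← Real.exp_add, ← Real.exp_add]
      congr 1
      rw [hz]; ring
    rw [hsplit]
    have hb1 : M * u * Real.exp (-z) ≤ K₂ := by
      have e1 : M * (u - 1) * Real.exp (-z) ≤ 2 := by
        have h := te_le_one hz0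
        have : M * (u - 1) * Real.exp (-z) = 2 * (z * Real.exp (-z)) := by
          rw [hz]; ring
        linarith [this ▸ (by linarith : 2 * (z * Real.exp (-z)) ≤ 2)]
      have hq : 0 < Real.exp (2 * L) - 1 := by linarith
      have e2 : M * Real.exp (-z) ≤ 2 / (Real.exp (2 * L) - 1) := by
        obtain ⟨z₀, hz₀⟩ : ∃ x : ℝ, x = M * (Real.exp (2 * L) - 1) / 2 := ⟨_, rfl⟩
        have hz₀0 : 0 ≤ z₀ := by
          rw [hz₀]
          have := mul_nonneg hMpos.le (by linarith : (0:ℝ) ≤ Real.exp (2 * L) - 1)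
          linarith
        have hzz₀ : z₀ ≤ z := by
          rw [hz, hz₀]
          have := mul_le_mul_of_nonneg_left (by linarith : Real.exp (2 * L) - 1 ≤ u - 1) hMpos.le
          linarith
        have h3 : Real.exp (-z) ≤ Real.exp (-z₀) := Real.exp_le_exp.2 (by linarith)
        have h4 := te_le_one hz₀0
        have hpos : (0:ℝ) < 2 / (Real.exp (2 * L) - 1) := by positivity
        have h5 : M * Real.exp (-z₀) ≤ 2 / (Real.exp (2 * L) - 1) := by
          have h6 := mul_le_mul_of_nonneg_left h4 hpos.le
          have h7 : M * Real.exp (-z₀)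
              = 2 / (Real.exp (2 * L) - 1) * (z₀ * Real.exp (-z₀)) := by
            rw [hz₀]
            field_simp
          rw [h7]
          linarith
        calc M * Real.exp (-z) ≤ M * Real.exp (-z₀) :=
              mul_le_mul_of_nonneg_left h3 hMpos.le
          _ ≤ 2 / (Real.exp (2 * L) - 1) := h5
      calc M * u * Real.exp (-z)
          = M * (u - 1) * Real.exp (-z) + M * Real.exp (-z) := by ring
        _ ≤ 2 + 2 / (Real.exp (2 * L) - 1) := add_le_add e1 e2
        _ = K₂ := hK₂.symm
    have hb2 : Real.exp (-z) ≤ ρ ^ k := by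
      rw [hρ, ← Real.exp_nat_mul]
      apply Real.exp_le_exp.2
      have hu1' : (0:ℝ) ≤ u - 1 := by linarith
      have hukL : (0:ℝ) ≤ u - 1 - 2 * (k : ℝ) * L := by
        nlinarith [Nat.cast_nonneg (α := ℝ) k]
      have hp1 : 0 ≤ (M - γ / 2) * (u - 1) := mul_nonneg (by linarith) hu1'
      have hp2 : 0 ≤ (γ / 2) * (u - 1 - 2 * (k : ℝ) * L) := mul_nonneg (by linarith) hukL
      rw [hz]
      linarith [hp1, hp2]
    have hEeq : Real.exp (-(γ * Real.exp (2 * η) / 2)) = Real.exp (-M) := by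
      congr 1; rw [hM]; ring
    rw [hEeq]
    calc M * u * (Real.exp (-M) * Real.exp (-z) * Real.exp (-z))
        = (M * u * Real.exp (-z)) * Real.exp (-M) * Real.exp (-z) := by ring
      _ ≤ K₂ * Real.exp (-M) * ρ ^ k := by
          apply mul_le_mul
          · exact mul_le_mul_of_nonneg_right hb1 (Real.exp_pos _).le
          · exact hb2
          · exact (Real.exp_pos _).le
          · positivity
  have hsum_neg : Summable (fun k : ℕ => f (-((k : ℤ) + 1))) := by
    refine Summable.of_nonneg_of_le (fun k => hf0 _) keyNeg ?_
    exact (summable_geometric_of_lt_one hρ0.le hρ1).mul_left _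
  have hSummf : Summable f := Summable.of_nat_of_neg_add_one hsum_pos hsum_neg
  -- decomposition of Sh
  have hShTsum : Sh η = ∑' l : ℤ, f l := by
    rw [hSh]
    exact tsum_congr (fun l => hfA l)
  have hdecomp1 : ∑' l : ℤ, f l
      = (∑' k : ℕ, f k) + ∑' k : ℕ, f (-((k : ℤ) + 1)) :=
    (hsum_pos.hasSum.of_nat_of_neg_add_one hsum_neg.hasSum).tsum_eq
  have hdecomp2 : (∑ l ∈ Finset.range n, f l) + ∑' k : ℕ, f ((k + n : ℕ))
      = ∑' k : ℕ, f k := Summable.sum_add_tsum_nat_add n hsum_pos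
  -- the B factor
  obtain ⟨Bt, hBt⟩ : ∃ Bt : ℕ → ℝ,
      Bt = fun l : ℕ => B (((n : ℝ) - l) * L - η + θ₀) := ⟨_, rfl⟩
  have hBtval : ∀ l : ℕ,
      Bt l = Real.exp (-(γ₀ / 2 * Real.exp (2 * η - 2 * ((n : ℝ) - l) * L))) := by
    intro l
    rw [hBt]
    simp only []
    rw [hB]
    have hx : Real.exp (-2 * (((n : ℝ) - l) * L - η + θ₀))
        = γ₀ * Real.exp (2 * η - 2 * ((n : ℝ) - l) * L) := by
      rw [show -2 * (((n : ℝ) - l) * L - η + θ₀)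
          = (2 * η - 2 * ((n : ℝ) - l) * L) + -(2 * θ₀) by ring, Real.exp_add, hexpθ0]
      ring
    rw [hx, show -(1/2) * (γ₀ * Real.exp (2 * η - 2 * ((n : ℝ) - l) * L))
        = -(γ₀ / 2 * Real.exp (2 * η - 2 * ((n : ℝ) - l) * L)) by ring]
  have hBt0 : ∀ l : ℕ, 0 ≤ Bt l := by
    intro l; rw [hBtval l]; exact (Real.exp_pos _).le
  have hBt1 : ∀ l : ℕ, Bt l ≤ 1 := by
    intro l; rw [hBtval l]
    exact Real.exp_le_one_iff.2 (neg_nonpos.mpr (by positivity))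
  have h1mB : ∀ l : ℕ, 1 - Bt l ≤ γ₀ / 2 * Real.exp (2 * η - 2 * ((n : ℝ) - l) * L) := by
    intro l
    rw [hBtval l]
    linarith [Real.add_one_le_exp (-(γ₀ / 2 * Real.exp (2 * η - 2 * ((n : ℝ) - l) * L)))]
  -- rewrite St
  have hStEq : St n η = ∑ l ∈ Finset.range n, f l * Bt l := by
    rw [hSt]
    apply Finset.sum_congr rfl
    intro l _
    have h1 : A ((l : ℝ) * L - η + θb) = f (l : ℤ) := by
      have := hfA (l : ℤ)
      rw [show (((l : ℤ) : ℝ)) = (l : ℝ) by push_cast; ring] at this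
      exact this
    rw [h1, hBt]
  -- the key identity
  have hkey : St n η - Sh η
      = -((∑ l ∈ Finset.range n, f l * (1 - Bt l))
          + (∑' k : ℕ, f (-((k : ℤ) + 1))) + (∑' k : ℕ, f ((k + n : ℕ)))) := by
    rw [hStEq, hShTsum, hdecomp1, ← hdecomp2]
    have hsplit : ∑ l ∈ Finset.range n, f l * (1 - Bt l)
        = (∑ l ∈ Finset.range n, f (l : ℤ)) - ∑ l ∈ Finset.range n, f l * Bt l := by
      rw [← Finset.sum_sub_distrib]
      apply Finset.sum_congr rfl
      intro l _
      ring
    rw [hsplit]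
    ring
  -- nonnegativity of the three pieces
  have hP30 : 0 ≤ ∑ l ∈ Finset.range n, f l * (1 - Bt l) :=
    Finset.sum_nonneg (fun l _ => mul_nonneg (hf0 _) (by linarith [hBt1 l]))
  have hTneg0 : 0 ≤ ∑' k : ℕ, f (-((k : ℤ) + 1)) := tsum_nonneg (fun k => hf0 _)
  have hTpos0 : 0 ≤ ∑' k : ℕ, f ((k + n : ℕ)) := tsum_nonneg (fun k => hf0 _)
  -- bound on Tpos
  have hnL0 : 0 ≤ (n : ℝ) * L := by linarith
  have hTposB : (∑' k : ℕ, f ((k + n : ℕ))) ≤ C₂ * Real.exp (-((n : ℝ) * L - 2 * η)) := by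
    have hterm : ∀ k : ℕ, f ((k + n : ℕ))
        ≤ (γ / 2 * Real.exp (2 * η - 2 * (n : ℝ) * L)) * r ^ k := by
      intro k
      have h1 : f ((k + n : ℕ)) ≤ γ / 2 * Real.exp (2 * η - 2 * (((k + n : ℕ) : ℤ) : ℝ) * L) := by
        rw [hf]; exact hFle _
      have h2 : γ / 2 * Real.exp (2 * η - 2 * (((k + n : ℕ) : ℤ) : ℝ) * L)
          = (γ / 2 * Real.exp (2 * η - 2 * (n : ℝ) * L)) * r ^ k := by
        rw [hr, ← Real.exp_nat_mul,
          show 2 * η - 2 * (((k + n : ℕ) : ℤ) : ℝ) * L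
            = (2 * η - 2 * (n : ℝ) * L) + (k : ℝ) * -(2 * L) by push_cast; ring,
          Real.exp_add]
        ring
      linarith
    have hsumshift : Summable (fun k : ℕ => f ((k + n : ℕ))) :=
      (summable_nat_add_iff n).2 hsum_pos
    have h3 : (∑' k : ℕ, f ((k + n : ℕ)))
        ≤ ∑' k : ℕ, (γ / 2 * Real.exp (2 * η - 2 * (n : ℝ) * L)) * r ^ k :=
      Summable.tsum_le_tsum hterm hsumshift ((summable_geometric_of_lt_one hr0.le hr1).mul_left _)
    rw [tsum_mul_left, tsum_geometric_of_lt_one hr0.le hr1] at h3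
    have h4 : Real.exp (2 * η - 2 * (n : ℝ) * L)
        = Real.exp (-((n : ℝ) * L - 2 * η)) * Real.exp (-((n : ℝ) * L)) := by
      rw [← Real.exp_add]; congr 1; ring
    have h5 : Real.exp (-((n : ℝ) * L)) ≤ 1 := Real.exp_le_one_iff.2 (by linarith)
    have h6 : γ / 2 * Real.exp (2 * η - 2 * (n : ℝ) * L) * (1 - r)⁻¹
        ≤ C₂ * Real.exp (-((n : ℝ) * L - 2 * η)) := by
      rw [h4, hC₂]
      have hrp : (0:ℝ) ≤ (1 - r)⁻¹ := by
        have : 0 < 1 - r := by linarith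
        positivity
      have hm : Real.exp (-((n : ℝ) * L - 2 * η)) * Real.exp (-((n : ℝ) * L))
          ≤ Real.exp (-((n : ℝ) * L - 2 * η)) * 1 :=
        mul_le_mul_of_nonneg_left h5 (Real.exp_nonneg _)
      have hm2 := mul_le_mul_of_nonneg_right
        (mul_le_mul_of_nonneg_left hm (by positivity : (0:ℝ) ≤ γ / 2)) hrp
      calc γ / 2 * (Real.exp (-((n : ℝ) * L - 2 * η)) * Real.exp (-((n : ℝ) * L))) * (1 - r)⁻¹
          ≤ γ / 2 * (Real.exp (-((n : ℝ) * L - 2 * η)) * 1) * (1 - r)⁻¹ := hm2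
        _ = γ / 2 * (1 - r)⁻¹ * Real.exp (-((n : ℝ) * L - 2 * η)) := by ring
    linarith
  -- bound on Tneg
  have hTnegB : (∑' k : ℕ, f (-((k : ℤ) + 1)))
      ≤ C₁ * Real.exp (-(γ * Real.exp (2 * η) / 2)) := by
    have h3 : (∑' k : ℕ, f (-((k : ℤ) + 1)))
        ≤ ∑' k : ℕ, K₂ * Real.exp (-(γ * Real.exp (2 * η) / 2)) * ρ ^ k :=
      Summable.tsum_le_tsum keyNeg hsum_neg ((summable_geometric_of_lt_one hρ0.le hρ1).mul_left _)
    rw [tsum_mul_left, tsum_geometric_of_lt_one hρ0.le hρ1] at h3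
    calc (∑' k : ℕ, f (-((k : ℤ) + 1)))
        ≤ K₂ * Real.exp (-(γ * Real.exp (2 * η) / 2)) * (1 - ρ)⁻¹ := h3
      _ = C₁ * Real.exp (-(γ * Real.exp (2 * η) / 2)) := by rw [hC₁]; ring
  -- bound on the main sum
  have hP3B : (∑ l ∈ Finset.range n, f l * (1 - Bt l))
      ≤ C₃ * Real.exp (-((n : ℝ) * L - 2 * η)) := by
    have hterm : ∀ l ∈ Finset.range n, f (l : ℤ) * (1 - Bt l)
        ≤ (K₃ * Real.exp (-((n : ℝ) * L - 2 * η))) * w ^ (((n : ℤ) - 2 * (l : ℤ)).natAbs) := by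
      intro l _
      have hcast : (((l : ℤ)) : ℝ) = (l : ℝ) := by push_cast; ring
      -- bound on f l
      have hs : f (l : ℤ) ≤ max 1 (γ / 2) * Real.exp (min 0 (2 * η - 2 * (l : ℝ) * L)) := by
        rcases le_total (2 * η - 2 * (l : ℝ) * L) 0 with h | h
        · rw [min_eq_right h]
          have h1 : f (l : ℤ) ≤ γ / 2 * Real.exp (2 * η - 2 * (((l : ℤ)) : ℝ) * L) := by
            rw [hf]; exact hFle _
          rw [hcast] at h1
          calc f (l : ℤ) ≤ γ / 2 * Real.exp (2 * η - 2 * (l : ℝ) * L) := h1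
            _ ≤ max 1 (γ / 2) * Real.exp (2 * η - 2 * (l : ℝ) * L) :=
                mul_le_mul_of_nonneg_right (le_max_right _ _) (Real.exp_nonneg _)
        · rw [min_eq_left h, Real.exp_zero, mul_one]
          calc f (l : ℤ) ≤ 1 := by rw [hf]; exact hFle1 _
            _ ≤ max 1 (γ / 2) := le_max_left _ _
      -- bound on 1 - Bt l
      have hs' : 1 - Bt l ≤ max 1 (γ₀ / 2) * Real.exp (min 0 (2 * η - 2 * ((n : ℝ) - l) * L)) := by
        rcases le_total (2 * η - 2 * ((n : ℝ) - l) * L) 0 with h | h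
        · rw [min_eq_right h]
          calc 1 - Bt l ≤ γ₀ / 2 * Real.exp (2 * η - 2 * ((n : ℝ) - l) * L) := h1mB l
            _ ≤ max 1 (γ₀ / 2) * Real.exp (2 * η - 2 * ((n : ℝ) - l) * L) :=
                mul_le_mul_of_nonneg_right (le_max_right _ _) (Real.exp_nonneg _)
        · rw [min_eq_left h, Real.exp_zero, mul_one]
          calc 1 - Bt l ≤ 1 := by linarith [hBt0 l]
            _ ≤ max 1 (γ₀ / 2) := le_max_left _ _
      have hprod : f (l : ℤ) * (1 - Bt l)
          ≤ (max 1 (γ / 2) * Real.exp (min 0 (2 * η - 2 * (l : ℝ) * L)))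
            * (max 1 (γ₀ / 2) * Real.exp (min 0 (2 * η - 2 * ((n : ℝ) - l) * L))) := by
        apply mul_le_mul hs hs' (by linarith [hBt1 l])
        positivity
      have hK₃form : (max 1 (γ / 2) * Real.exp (min 0 (2 * η - 2 * (l : ℝ) * L)))
            * (max 1 (γ₀ / 2) * Real.exp (min 0 (2 * η - 2 * ((n : ℝ) - l) * L)))
          = K₃ * Real.exp (min 0 (2 * η - 2 * (l : ℝ) * L)
              + min 0 (2 * η - 2 * ((n : ℝ) - l) * L)) := by
        rw [hK₃, Real.exp_add]; ring
      have hwpow : w ^ (((n : ℤ) - 2 * (l : ℤ)).natAbs)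
          = Real.exp (((((n : ℤ) - 2 * (l : ℤ)).natAbs : ℕ) : ℝ) * -(L / 2)) := by
        rw [hw, ← Real.exp_nat_mul]
      have hmcast : ((((n : ℤ) - 2 * (l : ℤ)).natAbs : ℕ) : ℝ) = |(n : ℝ) - 2 * (l : ℝ)| := by
        rw [Nat.cast_natAbs]
        push_cast
        ring_nf
      have hexp_le : Real.exp (min 0 (2 * η - 2 * (l : ℝ) * L)
              + min 0 (2 * η - 2 * ((n : ℝ) - l) * L))
          ≤ Real.exp (-((n : ℝ) * L - 2 * η)) * w ^ (((n : ℤ) - 2 * (l : ℤ)).natAbs) := by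
        rw [hwpow, hmcast, ← Real.exp_add]
        apply Real.exp_le_exp.2
        have m1 : min 0 (2 * η - 2 * (l : ℝ) * L) ≤ 2 * η - 2 * (l : ℝ) * L :=
          min_le_right _ _
        have m2 : min 0 (2 * η - 2 * (l : ℝ) * L) ≤ 0 := min_le_left _ _
        have m3 : min 0 (2 * η - 2 * ((n : ℝ) - l) * L) ≤ 2 * η - 2 * ((n : ℝ) - l) * L :=
          min_le_right _ _
        have m4 : min 0 (2 * η - 2 * ((n : ℝ) - l) * L) ≤ 0 := min_le_left _ _
        rcases le_total ((n : ℝ) - 2 * (l : ℝ)) 0 with hc | hc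
        · rw [abs_of_nonpos hc]
          linarith
        · rw [abs_of_nonneg hc]
          linarith
      calc f (l : ℤ) * (1 - Bt l)
          ≤ K₃ * Real.exp (min 0 (2 * η - 2 * (l : ℝ) * L)
              + min 0 (2 * η - 2 * ((n : ℝ) - l) * L)) := by rw [← hK₃form]; exact hprod
        _ ≤ K₃ * (Real.exp (-((n : ℝ) * L - 2 * η)) * w ^ (((n : ℤ) - 2 * (l : ℤ)).natAbs)) :=
            mul_le_mul_of_nonneg_left hexp_le hK₃pos.le
        _ = (K₃ * Real.exp (-((n : ℝ) * L - 2 * η))) * w ^ (((n : ℤ) - 2 * (l : ℤ)).natAbs) := by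
            ring
    calc (∑ l ∈ Finset.range n, f l * (1 - Bt l))
        ≤ ∑ l ∈ Finset.range n,
            (K₃ * Real.exp (-((n : ℝ) * L - 2 * η))) * w ^ (((n : ℤ) - 2 * (l : ℤ)).natAbs) :=
          Finset.sum_le_sum hterm
      _ = (K₃ * Real.exp (-((n : ℝ) * L - 2 * η)))
          * ∑ l ∈ Finset.range n, w ^ (((n : ℤ) - 2 * (l : ℤ)).natAbs) := by
          rw [Finset.mul_sum]
      _ ≤ (K₃ * Real.exp (-((n : ℝ) * L - 2 * η))) * (2 * (1 - w)⁻¹) :=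
          mul_le_mul_of_nonneg_left (sum_w_abs w hw0 hw1 n) (by positivity)
      _ = C₃ * Real.exp (-((n : ℝ) * L - 2 * η)) := by rw [hC₃]; ring
  -- lower bound on Sh
  have hlow : c₀ ≤ Sh η := by
    have h1 : η ≤ ((⌈η / L⌉ : ℤ) : ℝ) * L := by
      have h := Int.le_ceil (η / L)
      have h2 := mul_le_mul_of_nonneg_right h hL.le
      rw [div_mul_cancel₀] at h2
      · exact h2
      · exact ne_of_gt hL
    have h2 : ((⌈η / L⌉ : ℤ) : ℝ) * L ≤ η + L := by
      have h := Int.ceil_lt_add_one (η / L)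
      have h3 := mul_le_mul_of_nonneg_right h.le hL.le
      rw [add_mul, div_mul_cancel₀, one_mul] at h3
      · exact h3
      · exact ne_of_gt hL
    have hc : c₀ ≤ f ⌈η / L⌉ := by
      rw [hf]
      simp only []
      rw [hF]
      simp only []
      have hs1 : -(2 * L) ≤ 2 * η - 2 * ((⌈η / L⌉ : ℤ) : ℝ) * L := by linarith
      have hs2 : 2 * η - 2 * ((⌈η / L⌉ : ℤ) : ℝ) * L ≤ 0 := by linarith
      have he1 : Real.exp (-(2 * L)) ≤ Real.exp (2 * η - 2 * ((⌈η / L⌉ : ℤ) : ℝ) * L) :=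
        Real.exp_le_exp.2 hs1
      have he2 : Real.exp (2 * η - 2 * ((⌈η / L⌉ : ℤ) : ℝ) * L) ≤ 1 :=
        Real.exp_le_one_iff.2 hs2
      have he3 : Real.exp (-(γ / 2))
          ≤ Real.exp (-(γ / 2 * Real.exp (2 * η - 2 * ((⌈η / L⌉ : ℤ) : ℝ) * L))) := by
        apply Real.exp_le_exp.2
        have := mul_le_mul_of_nonneg_left he2 (by positivity : (0:ℝ) ≤ γ / 2)
        linarith
      rw [hc₀def]
      have hg1 : γ / 2 * Real.exp (-(2 * L))
          ≤ γ / 2 * Real.exp (2 * η - 2 * ((⌈η / L⌉ : ℤ) : ℝ) * L) :=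
        mul_le_mul_of_nonneg_left he1 (by positivity : (0:ℝ) ≤ γ / 2)
      apply mul_le_mul hg1 he3 (Real.exp_pos _).le
      positivity
    calc c₀ ≤ f ⌈η / L⌉ := hc
      _ ≤ ∑' l : ℤ, f l := Summable.le_tsum hSummf _ (fun j _ => hf0 j)
      _ = Sh η := hShTsum.symm
  have hSh0 : 0 ≤ Sh η := le_trans hc₀pos.le hlow
  -- final assembly
  rw [hkey, abs_neg, abs_of_nonneg (by linarith)]
  have hGeq : Real.exp (-γ * Real.exp (2 * η) / 2)
      = Real.exp (-(γ * Real.exp (2 * η) / 2)) := by congr 1; ring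
  rw [hGeq]
  have eD := Real.exp_nonneg (-((n : ℝ) * L - 2 * η))
  have eG := Real.exp_nonneg (-(γ * Real.exp (2 * η) / 2))
  have hstep1 : (∑ l ∈ Finset.range n, f l * (1 - Bt l))
      + (∑' k : ℕ, f (-((k : ℤ) + 1))) + (∑' k : ℕ, f ((k + n : ℕ)))
      ≤ (C₁ + C₂ + C₃) * (Real.exp (-((n : ℝ) * L - 2 * η))
          + Real.exp (-(γ * Real.exp (2 * η) / 2))) := by
    have p1 : 0 ≤ C₁ * Real.exp (-((n : ℝ) * L - 2 * η)) := mul_nonneg hC₁pos.le eD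
    have p2 : 0 ≤ C₂ * Real.exp (-(γ * Real.exp (2 * η) / 2)) := mul_nonneg hC₂pos.le eG
    have p3 : 0 ≤ C₃ * Real.exp (-(γ * Real.exp (2 * η) / 2)) := mul_nonneg hC₃pos.le eG
    linarith [hP3B, hTnegB, hTposB]
  have hstep2 : (C₁ + C₂ + C₃) * (Real.exp (-((n : ℝ) * L - 2 * η))
          + Real.exp (-(γ * Real.exp (2 * η) / 2)))
      ≤ (C₁ + C₂ + C₃) / c₀ * (Real.exp (-((n : ℝ) * L - 2 * η))
          + Real.exp (-(γ * Real.exp (2 * η) / 2))) * Sh η := by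
    have hC : 0 ≤ (C₁ + C₂ + C₃) / c₀ := div_nonneg (by linarith) hc₀pos.le
    have hfac : 0 ≤ (C₁ + C₂ + C₃) / c₀ * (Real.exp (-((n : ℝ) * L - 2 * η))
          + Real.exp (-(γ * Real.exp (2 * η) / 2))) := mul_nonneg hC (by linarith)
    have heq : (C₁ + C₂ + C₃) * (Real.exp (-((n : ℝ) * L - 2 * η))
          + Real.exp (-(γ * Real.exp (2 * η) / 2)))
        = (C₁ + C₂ + C₃) / c₀ * (Real.exp (-((n : ℝ) * L - 2 * η))
          + Real.exp (-(γ * Real.exp (2 * η) / 2))) * c₀ := by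
      field_simp
    rw [heq]
    exact mul_le_mul_of_nonneg_left hlow hfac
  linarith
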